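/- Let p ≥ 1 be a natural number. In the ℝ-vector space of polynomial vector fields Fin 3 → MvPolynomial (Fin 3) ℝ, consider the first-kind Nédélec shape-function space NED¹_p := {q : each component of q has total degree ≤ p−1} + S_p, where S_p := {q : each component of q has total degree ≤ p and x₁·q₁ + x₂·q₂ + x₃·q₃ = 0}. Then dim_ℝ NED¹_p = p·(p+2)·(p+3)/2. -/

import Mathlib

open MvPolynomial

/-- Vector fields with polynomial components of total degree at most `k`,
as a subspace of `Fin 3 → MvPolynomial (Fin 3) ℝ`. -/
noncomputable def polyVec (k : ℕ) : Submodule ℝ (Fin 3 → MvPolynomial (Fin 3) ℝ) :=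
  Submodule.pi Set.univ (fun _ => restrictTotalDegree (Fin 3) ℝ k)

/-- The linear map `q ↦ x₁·q₁ + x₂·q₂ + x₃·q₃`. -/
noncomputable def dotWithX :
    (Fin 3 → MvPolynomial (Fin 3) ℝ) →ₗ[ℝ] MvPolynomial (Fin 3) ℝ :=
  ∑ i : Fin 3, (LinearMap.mulLeft ℝ (X i)).comp (LinearMap.proj i)

/-- The subspace `S_p = {q ∈ (P_p)³ : q · x = 0}`. -/
noncomputable def SSpace (p : ℕ) : Submodule ℝ (Fin 3 → MvPolynomial (Fin 3) ℝ) :=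
  polyVec p ⊓ LinearMap.ker dotWithX

/-- The first-kind Nédélec shape-function space `NED¹_p = (P_{p−1})³ + S_p`. -/
noncomputable def NedOneSpace (p : ℕ) : Submodule ℝ (Fin 3 → MvPolynomial (Fin 3) ℝ) :=
  polyVec (p - 1) ⊔ SSpace p

/-! ### Auxiliary results -/

section Aux

/-- functions on `Fin 3` with sum ≤ k  ≃  functions on `Fin 4` with sum = k. -/
def snocEquiv (k : ℕ) : {g : Fin 3 → ℕ // ∑ i, g i ≤ k} ≃ {h : Fin 4 → ℕ // ∑ i, h i = k} where
  toFun g := ⟨Fin.snoc g.1 (k - ∑ i, g.1 i), by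
    have := g.2
    rw [Fin.sum_univ_castSucc]
    simp only [Fin.snoc_castSucc, Fin.snoc_last]
    omega⟩
  invFun h := ⟨fun i => h.1 i.castSucc, by
    have := h.2
    rw [Fin.sum_univ_castSucc] at this
    exact le_of_le_of_eq (Nat.le_add_right _ _) this⟩
  left_inv g := by
    ext i
    simp [Fin.snoc_castSucc]
  right_inv h := by
    ext i
    refine Fin.lastCases ?_ (fun j => ?_) i
    · have := h.2
      rw [Fin.sum_univ_castSucc] at this
      simp only [Fin.snoc_last]
      omega
    · simp [Fin.snoc_castSucc]

noncomputable def finsuppSumLeEquiv (k : ℕ) :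
    {n : Fin 3 →₀ ℕ // (n.sum fun _ e => e) ≤ k} ≃ Sym (Fin 4) k :=
  ((Finsupp.equivFunOnFinite.subtypeEquiv fun f => by
      rw [Finsupp.sum_fintype _ _ (fun _ => rfl)]; rfl).trans
    ((snocEquiv k).trans
      (Finsupp.equivFunOnFinite.symm.subtypeEquiv fun h => by
        rw [Finsupp.sum_fintype _ _ (fun _ => rfl)]; rfl).symm.symm)).trans
    (Sym.equivNatSum (Fin 4) k).symm

lemma finrank_restrictTotalDegree (k : ℕ) :
    Module.finrank ℝ (restrictTotalDegree (Fin 3) ℝ k) = (k + 3).choose 3 := by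
  haveI : Fintype {n : Fin 3 →₀ ℕ // (n.sum fun _ e => e) ≤ k} :=
    Fintype.ofEquiv _ (finsuppSumLeEquiv k).symm
  have b : Module.Basis {n : Fin 3 →₀ ℕ // (n.sum fun _ e => e) ≤ k} ℝ
      (restrictTotalDegree (Fin 3) ℝ k) :=
    basisRestrictSupport ℝ _
  rw [Module.finrank_eq_card_basis b, Fintype.card_congr (finsuppSumLeEquiv k),
    Sym.card_sym_eq_choose]
  have h4 : Fintype.card (Fin 4) + k - 1 = k + 3 := by simp; omega
  rw [h4, ← Nat.choose_symm (Nat.le_add_right k 3)]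
  congr 1
  omega

/-- `polyVec k` is linearly equivalent to a product of three copies of
`restrictTotalDegree`. -/
noncomputable def polyVecEquiv (k : ℕ) :
    polyVec k ≃ₗ[ℝ] (Fin 3 → restrictTotalDegree (Fin 3) ℝ k) where
  toFun q i := ⟨q.1 i, q.2 i (Set.mem_univ i)⟩
  map_add' _ _ := rfl
  map_smul' _ _ := rfl
  invFun g := ⟨fun i => g i, fun i _ => (g i).2⟩
  left_inv q := rfl
  right_inv g := rfl

instance polyVec_finiteDimensional (k : ℕ) : FiniteDimensional ℝ (polyVec k) :=
  LinearEquiv.finiteDimensional (polyVecEquiv k).symm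

lemma finrank_polyVec (k : ℕ) :
    Module.finrank ℝ (polyVec k) = 3 * (k + 3).choose 3 := by
  haveI : Module.Free ℝ (restrictTotalDegree (Fin 3) ℝ k) :=
    Module.Free.of_basis (basisRestrictSupport ℝ _)
  rw [LinearEquiv.finrank_eq (polyVecEquiv k), Module.finrank_pi_fintype,
    Finset.sum_congr rfl fun i _ => finrank_restrictTotalDegree k]
  simp [Finset.sum_const]

lemma dotWithX_apply (q : Fin 3 → MvPolynomial (Fin 3) ℝ) :
    dotWithX q = ∑ i : Fin 3, X i * q i := by
  simp [dotWithX]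

lemma dotWithX_single (i : Fin 3) (g : MvPolynomial (Fin 3) ℝ) :
    dotWithX (Pi.single i g) = X i * g := by
  rw [dotWithX_apply, Finset.sum_eq_single i] <;>
    simp +contextual [Pi.single_apply]

lemma monomial_mem (k : ℕ) (v : Fin 3 →₀ ℕ) (c : ℝ) (hv : v ≠ 0)
    (hd : (v.sum fun _ e => e) ≤ k + 1) :
    monomial v c ∈ Submodule.map dotWithX (polyVec k) := by
  obtain ⟨i, hi⟩ : ∃ i, v i ≠ 0 := by
    by_contra h
    push_neg at h
    exact hv (Finsupp.ext fun i => h i)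
  set w := v - Finsupp.single i 1 with hw
  have hvw : v = w + Finsupp.single i 1 := by
    ext j
    rcases eq_or_ne j i with rfl | hj
    · simp [hw]; omega
    · simp [hw, Finsupp.single_eq_of_ne' (Ne.symm hj)]
  have hsum : (v.sum fun _ e => e) = (w.sum fun _ => id) + 1 := by
    rw [hvw, Finsupp.sum_add_index' (fun _ => rfl) (fun _ _ _ => rfl),
      Finsupp.sum_single_index rfl]
    rfl
  refine ⟨Pi.single i (monomial w c), ?_, ?_⟩
  · intro j _
    rw [SetLike.mem_coe, mem_restrictTotalDegree]
    rcases eq_or_ne j i with rfl | hj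
    · rw [Pi.single_eq_same]
      exact (totalDegree_monomial_le _ _).trans (by omega)
    · rw [Pi.single_eq_of_ne hj]
      simp
  · rw [dotWithX_single, X, monomial_mul, one_mul, add_comm, ← hvw]

lemma map_dotWithX (k : ℕ) :
    Submodule.map dotWithX (polyVec k) =
      restrictTotalDegree (Fin 3) ℝ (k + 1) ⊓ LinearMap.ker (lcoeff ℝ 0) := by
  apply le_antisymm
  · rintro f ⟨q, hq, rfl⟩
    have hq' : ∀ i, (q i).totalDegree ≤ k := fun i =>
      (mem_restrictTotalDegree _ _ _).mp (hq i (Set.mem_univ i))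
    constructor
    · rw [SetLike.mem_coe, mem_restrictTotalDegree, dotWithX_apply]
      refine (totalDegree_finset_sum _ _).trans (Finset.sup_le fun i _ => ?_)
      refine (totalDegree_mul _ _).trans ?_
      rw [totalDegree_X]
      have := hq' i
      omega
    · rw [SetLike.mem_coe, LinearMap.mem_ker, lcoeff_apply, dotWithX_apply]
      rw [← constantCoeff_eq, map_sum]
      simp
  · rintro f ⟨hdeg, hcc⟩
    rw [SetLike.mem_coe, mem_restrictTotalDegree] at hdeg
    rw [SetLike.mem_coe, LinearMap.mem_ker, lcoeff_apply] at hcc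
    nth_rewrite 1 [as_sum f]
    apply Submodule.sum_mem
    intro v hv
    refine monomial_mem k v _ ?_ ((le_totalDegree hv).trans hdeg)
    rintro rfl
    exact (mem_support_iff.mp hv) hcc

lemma finrank_map_add_finrank_inf_ker {M N : Type*} [AddCommGroup M] [Module ℝ M]
    [AddCommGroup N] [Module ℝ N] (p : Submodule ℝ M) (f : M →ₗ[ℝ] N)
    [FiniteDimensional ℝ p] :
    Module.finrank ℝ (Submodule.map f p)
      + Module.finrank ℝ (p ⊓ LinearMap.ker f : Submodule ℝ M)
      = Module.finrank ℝ p := by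
  have h := LinearMap.finrank_range_add_finrank_ker (f.domRestrict p)
  rw [LinearMap.range_domRestrict, LinearMap.ker_domRestrict] at h
  have hc : Submodule.comap p.subtype (LinearMap.ker f)
      = Submodule.comap p.subtype (p ⊓ LinearMap.ker f) := by
    ext x
    simp [Submodule.mem_comap, x.2]
  rw [hc] at h
  rw [LinearEquiv.finrank_eq
    (Submodule.comapSubtypeEquivOfLe (inf_le_left : p ⊓ LinearMap.ker f ≤ p))] at h
  exact h

/-- The constant-coefficient functional is onto when restricted to polynomials of
degree at most `k+1`, so the subspace with vanishing constant term has codimension 1. -/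
lemma finrank_zero_constant (k : ℕ) :
    Module.finrank ℝ (restrictTotalDegree (Fin 3) ℝ (k + 1)
        ⊓ LinearMap.ker (lcoeff ℝ 0) : Submodule ℝ (MvPolynomial (Fin 3) ℝ)) + 1
      = (k + 4).choose 3 := by
  have h := finrank_map_add_finrank_inf_ker
    (restrictTotalDegree (Fin 3) ℝ (k + 1)) (lcoeff ℝ 0)
  have htop : Submodule.map (lcoeff ℝ 0) (restrictTotalDegree (Fin 3) ℝ (k + 1)) = ⊤ := by
    rw [Submodule.eq_top_iff']
    intro x
    refine ⟨C x, ?_, ?_⟩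
    · rw [SetLike.mem_coe, mem_restrictTotalDegree, totalDegree_C]
      omega
    · simp [lcoeff_apply]
  rw [htop, finrank_top, Module.finrank_self] at h
  rw [finrank_restrictTotalDegree] at h
  have : k + 1 + 3 = k + 4 := by omega
  rw [this] at h
  omega

lemma finrank_SSpace (k : ℕ) :
    Module.finrank ℝ (SSpace k) + (k + 4).choose 3 = 3 * (k + 3).choose 3 + 1 := by
  have h := finrank_map_add_finrank_inf_ker (polyVec k) dotWithX
  rw [map_dotWithX, finrank_polyVec] at h
  have h2 := finrank_zero_constant k
  rw [SSpace]
  omega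

lemma arith (p : ℕ) :
    4 * ((p + 3).choose 3) = (p + 4).choose 3 + p * (p + 2) * (p + 3) / 2 := by
  obtain ⟨a, ha⟩ : 6 ∣ (p + 3).descFactorial 3 := Nat.factorial_dvd_descFactorial _ 3
  obtain ⟨b, hb⟩ : 6 ∣ (p + 4).descFactorial 3 := Nat.factorial_dvd_descFactorial _ 3
  obtain ⟨c, hc⟩ : 2 ∣ p * (p + 2) * (p + 3) := by
    rw [mul_assoc]
    exact Dvd.dvd.mul_left ((Nat.even_mul_succ_self (p + 2)).two_dvd) p
  have key : 4 * ((p + 3).descFactorial 3) = (p + 4).descFactorial 3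
      + 3 * (p * (p + 2) * (p + 3)) := by
    simp [Nat.descFactorial]
    ring
  rw [ha, hb, hc] at key
  rw [Nat.choose_eq_descFactorial_div_factorial, Nat.choose_eq_descFactorial_div_factorial,
    ha, hb, hc]
  show 4 * (6 * a / 6) = 6 * b / 6 + 2 * c / 2
  rw [Nat.mul_div_cancel_left _ (by norm_num), Nat.mul_div_cancel_left _ (by norm_num),
    Nat.mul_div_cancel_left _ (by norm_num)]
  omega

lemma polyVec_mono {k l : ℕ} (h : k ≤ l) : polyVec k ≤ polyVec l := by
  intro q hq i _
  have := hq i (Set.mem_univ i)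
  rw [SetLike.mem_coe, mem_restrictTotalDegree] at this ⊢
  omega

instance SSpace_finiteDimensional (k : ℕ) : FiniteDimensional ℝ (SSpace k) :=
  Submodule.finiteDimensional_of_le (inf_le_left : SSpace k ≤ polyVec k)

end Aux

theorem nedelec_first_kind_dimension (p : ℕ) (hp : 1 ≤ p) :
    Module.finrank ℝ (NedOneSpace p) = p * (p + 2) * (p + 3) / 2 := by
  obtain ⟨m, rfl⟩ : ∃ m, p = m + 1 := ⟨p - 1, by omega⟩
  have hm : m + 1 - 1 = m := rfl
  have hinf : polyVec m ⊓ SSpace (m + 1) = SSpace m := by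
    rw [SSpace, SSpace, ← inf_assoc,
      inf_eq_left.mpr (polyVec_mono (Nat.le_succ m))]
  have h1 := Submodule.finrank_sup_add_finrank_inf_eq (polyVec m) (SSpace (m + 1))
  rw [hinf] at h1
  have hNed : NedOneSpace (m + 1) = polyVec m ⊔ SSpace (m + 1) := by
    rw [NedOneSpace, hm]
  rw [← hNed] at h1
  have h2 := finrank_SSpace (m + 1)
  have h3 := finrank_SSpace m
  have h4 := finrank_polyVec m
  have h5 := arith (m + 1)
  have e1 : m + 1 + 3 = m + 4 := rfl
  have e2 : m + 1 + 4 = m + 5 := rfl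
  have e3 : m + 1 + 2 = m + 3 := rfl
  rw [e1, e2] at h2
  rw [e1, e2, e3] at h5
  simp only [show m + 1 + 2 = m + 3 from rfl, show m + 1 + 3 = m + 4 from rfl]
  omega
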